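/- Every graph with average degree less than 10/3 contains a vertex of degree at most one, or a pair of adjacent vertices of degree two, or a vertex with effective degree at most two and degree between three and nine, or a vertex of degree three with at least two light neighbors. -/

import Mathlib

open MeasureTheory

variable {V : Type*}

/-- `φ` is a fractional `k`-arborization of `G`: each vertex gets a measurable subset of
`(0, k)` of Lebesgue measure one, and every level set induces a forest. -/
def FracArb (G : SimpleGraph V) (k : ℝ) (φ : V → Set ℝ) : Prop :=
  (∀ v, MeasurableSet (φ v)) ∧ (∀ v, φ v ⊆ Set.Ioo 0 k) ∧ (∀ v, volume (φ v) = 1) ∧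
    ∀ α : ℝ, (G.induce {v | α ∈ φ v}).IsAcyclic

/-- `G` has a fractional `k`-arborization. -/
def HasFracArb (G : SimpleGraph V) (k : ℝ) : Prop := ∃ φ, FracArb G k φ

/-- The fractional vertex-arboricity of `G`. -/
noncomputable def fva (G : SimpleGraph V) : ℝ := sInf {k : ℝ | 0 < k ∧ HasFracArb G k}

/-- The vertex-arboricity of `G`: least `k` admitting a partition into `k` forests. -/
noncomputable def va (G : SimpleGraph V) : ℕ :=
  sInf {k : ℕ | ∃ c : V → Fin k, ∀ i, (G.induce {v | c v = i}).IsAcyclic}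

/-- The maximum size of a set of vertices inducing a forest in `G`. -/
noncomputable def maxIndForest (G : SimpleGraph V) [Fintype V] : ℕ :=
  sSup {n : ℕ | ∃ S : Finset V, (G.induce (S : Set V)).IsAcyclic ∧ S.card = n}

/-- `H` is a minor of `G` (branch-set formulation). -/
def IsMinor {α : Type*} {β : Type*} (H : SimpleGraph α) (G : SimpleGraph β) : Prop :=
  ∃ f : α → Set β, (∀ a, (f a).Nonempty) ∧ (∀ a, (G.induce (f a)).Connected) ∧
    (Pairwise fun a b => Disjoint (f a) (f b)) ∧
    ∀ a b, H.Adj a b → ∃ x ∈ f a, ∃ y ∈ f b, G.Adj x y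

/-- Planarity, via Wagner's theorem: no `K₅` minor and no `K₃,₃` minor. -/
def Planar (G : SimpleGraph V) : Prop :=
  ¬ IsMinor (SimpleGraph.completeGraph (Fin 5)) G ∧
    ¬ IsMinor (completeBipartiteGraph (Fin 3) (Fin 3)) G

/-- Number of neighbors of `v` of degree at least three. -/
def effDeg (G : SimpleGraph V) [Fintype V] [DecidableRel G.Adj] (v : V) : ℕ :=
  ((G.neighborFinset v).filter fun u => 3 ≤ G.degree u).card

/-- `v` is light: effective degree at most three and degree at most five. -/
def Light (G : SimpleGraph V) [Fintype V] [DecidableRel G.Adj] (v : V) : Prop :=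
  effDeg G v ≤ 3 ∧ G.degree v ≤ 5

/-- `G` is `k`-arborically critical. -/
def ArbCritical (G : SimpleGraph V) (k : ℚ) : Prop :=
  (k : ℝ) < fva G ∧ ∀ H : G.Subgraph, H ≠ ⊤ → fva H.coe ≤ (k : ℝ)

instance (G : SimpleGraph V) [Fintype V] [DecidableRel G.Adj] (v : V) :
    Decidable (Light G v) := inferInstanceAs (Decidable (_ ∧ _))

namespace Discharge

open Finset SimpleGraph

/-- Amount of charge vertex `v` sends to vertex `u`. -/
def send (G : SimpleGraph V) [Fintype V] [DecidableRel G.Adj] (v u : V) : ℚ :=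
  if G.degree u = 2 ∧ 3 ≤ G.degree v then 2/3
  else if G.degree u = 3 ∧ ¬ Light G v then 1/6 else 0

lemma send_nonneg (G : SimpleGraph V) [Fintype V] [DecidableRel G.Adj] (v u : V) :
    0 ≤ send G v u := by
  unfold send; split_ifs <;> norm_num

lemma send_le (G : SimpleGraph V) [Fintype V] [DecidableRel G.Adj] (v u : V) :
    send G v u ≤ 2/3 := by
  unfold send; split_ifs <;> norm_num

lemma effDeg_le_degree (G : SimpleGraph V) [Fintype V] [DecidableRel G.Adj] (v : V) :
    effDeg G v ≤ G.degree v :=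
  Finset.card_filter_le _ _

lemma ch_ge (G : SimpleGraph V) [Fintype V] [DecidableEq V] [DecidableRel G.Adj]
    (h1 : ∀ v, 2 ≤ G.degree v)
    (h2 : ∀ v w, G.Adj v w → G.degree v = 2 → G.degree w ≠ 2)
    (h3 : ∀ v, 3 ≤ G.degree v → G.degree v ≤ 9 → 3 ≤ effDeg G v)
    (h4 : ∀ v, G.degree v = 3 → ((G.neighborFinset v).filter fun u => Light G u).card ≤ 1)
    (v : V) :
    (10/3 : ℚ) ≤ (G.degree v : ℚ) - (∑ u ∈ G.neighborFinset v, send G v u)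
      + ∑ u ∈ G.neighborFinset v, send G u v := by
  have hR0 : (0:ℚ) ≤ ∑ u ∈ G.neighborFinset v, send G u v :=
    Finset.sum_nonneg fun u _ => send_nonneg G u v
  have hed : effDeg G v ≤ G.degree v := effDeg_le_degree G v
  have hcard : (G.neighborFinset v).card = G.degree v := G.card_neighborFinset_eq_degree v
  obtain hd2 | hd3 | hd4 : G.degree v = 2 ∨ G.degree v = 3 ∨ 4 ≤ G.degree v := by
    have := h1 v; omega
  · -- degree 2
    have hLv : Light G v := ⟨by omega, by omega⟩
    have hS : ∑ u ∈ G.neighborFinset v, send G v u = 0 := by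
      refine Finset.sum_eq_zero fun u hu => ?_
      unfold send
      rw [if_neg (fun h => by omega), if_neg (fun h => h.2 hLv)]
    have hR : ∑ u ∈ G.neighborFinset v, send G u v = 4/3 := by
      have heach : ∀ u ∈ G.neighborFinset v, send G u v = 2/3 := by
        intro u hu
        have hadj : G.Adj v u := (G.mem_neighborFinset v u).1 hu
        have hne : G.degree u ≠ 2 := h2 v u hadj hd2
        have h3u : 3 ≤ G.degree u := by have := h1 u; omega
        unfold send
        rw [if_pos ⟨hd2, h3u⟩]
      rw [Finset.sum_congr rfl heach, Finset.sum_const, hcard, hd2]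
      norm_num
    rw [hS, hR, hd2]; norm_num
  · -- degree 3
    have he3 : effDeg G v = 3 := le_antisymm (by omega) (h3 v (by omega) (by omega))
    have hLv : Light G v := ⟨by omega, by omega⟩
    have hall : ∀ u ∈ G.neighborFinset v, 3 ≤ G.degree u := by
      apply Finset.filter_card_eq
      show effDeg G v = _
      omega
    have hS : ∑ u ∈ G.neighborFinset v, send G v u = 0 := by
      refine Finset.sum_eq_zero fun u hu => ?_
      have := hall u hu
      unfold send
      rw [if_neg (fun h => by omega), if_neg (fun h => h.2 hLv)]
    have hHcard : 2 ≤ ((G.neighborFinset v).filter fun u => ¬ Light G u).card := by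
      have := Finset.card_filter_add_card_filter_not
        (s := G.neighborFinset v) (fun u => Light G u)
      have := h4 v hd3
      omega
    have hR : (1/3 : ℚ) ≤ ∑ u ∈ G.neighborFinset v, send G u v := by
      have hsub : ((G.neighborFinset v).filter fun u => ¬ Light G u) ⊆ G.neighborFinset v :=
        Finset.filter_subset _ _
      have hH : ∑ u ∈ (G.neighborFinset v).filter (fun u => ¬ Light G u), send G u v
          = (((G.neighborFinset v).filter fun u => ¬ Light G u).card : ℚ) * (1/6) := by
        rw [Finset.sum_congr rfl (fun u hu => ?_), Finset.sum_const, nsmul_eq_mul]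
        have hu' : ¬ Light G u := (Finset.mem_filter.1 hu).2
        unfold send
        rw [if_neg (fun h => by omega), if_pos ⟨hd3, hu'⟩]
      have hle : ∑ u ∈ (G.neighborFinset v).filter (fun u => ¬ Light G u), send G u v
          ≤ ∑ u ∈ G.neighborFinset v, send G u v :=
        Finset.sum_le_sum_of_subset_of_nonneg hsub (fun u _ _ => send_nonneg G u v)
      have h2c : (2:ℚ) ≤ (((G.neighborFinset v).filter fun u => ¬ Light G u).card : ℚ) := by
        exact_mod_cast hHcard
      nlinarith [hH, hle, h2c]
    rw [hd3]; push_cast; linarith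
  · -- degree ≥ 4
    set B := (G.neighborFinset v).filter (fun u => 3 ≤ G.degree u) with hB
    set A := (G.neighborFinset v).filter (fun u => ¬ 3 ≤ G.degree u) with hA
    have hBe : B.card = effDeg G v := rfl
    have hae : B.card + A.card = G.degree v := by
      rw [hB, hA, Finset.card_filter_add_card_filter_not, hcard]
    have hsplit : ∑ u ∈ G.neighborFinset v, send G v u
        = (∑ u ∈ B, send G v u) + ∑ u ∈ A, send G v u := by
      rw [hB, hA, Finset.sum_filter_add_sum_filter_not]
    have hAle : ∑ u ∈ A, send G v u ≤ (A.card : ℚ) * (2/3) := by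
      calc ∑ u ∈ A, send G v u ≤ A.card • (2/3 : ℚ) :=
            Finset.sum_le_card_nsmul A _ _ (fun u _ => send_le G v u)
        _ = (A.card : ℚ) * (2/3) := by rw [nsmul_eq_mul]
    by_cases hLv : Light G v
    · -- light, degree 4 or 5
      have hd9 : G.degree v ≤ 9 := by have := hLv.2; omega
      have he3 : effDeg G v = 3 := le_antisymm hLv.1 (h3 v (by omega) hd9)
      have hBzero : ∑ u ∈ B, send G v u = 0 := by
        refine Finset.sum_eq_zero fun u hu => ?_
        have hu3 : 3 ≤ G.degree u := (Finset.mem_filter.1 hu).2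
        unfold send
        rw [if_neg (fun h => by omega), if_neg (fun h => h.2 hLv)]
      have hAcard : A.card = G.degree v - 3 := by omega
      have hAq : (A.card : ℚ) = (G.degree v : ℚ) - 3 := by
        rw [hAcard]; push_cast [Nat.cast_sub (by omega : 3 ≤ G.degree v)]; ring
      have hdq : (4:ℚ) ≤ (G.degree v : ℚ) := by exact_mod_cast hd4
      rw [hsplit, hBzero]
      linarith
    · -- heavy
      have hBle : ∑ u ∈ B, send G v u ≤ (B.card : ℚ) * (1/6) := by
        calc ∑ u ∈ B, send G v u ≤ B.card • (1/6 : ℚ) := by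
              refine Finset.sum_le_card_nsmul B _ _ (fun u hu => ?_)
              have hu3 : 3 ≤ G.degree u := (Finset.mem_filter.1 hu).2
              unfold send
              rw [if_neg (fun h => by omega)]
              split_ifs <;> norm_num
          _ = (B.card : ℚ) * (1/6) := by rw [nsmul_eq_mul]
      have hsum : (B.card : ℚ) + (A.card : ℚ) = (G.degree v : ℚ) := by exact_mod_cast hae
      have hdq : (4:ℚ) ≤ (G.degree v : ℚ) := by exact_mod_cast hd4
      rw [hsplit]
      by_cases hd9 : G.degree v ≤ 9
      · have he3 : 3 ≤ effDeg G v := h3 v (by omega) hd9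
        by_cases hd5 : G.degree v ≤ 5
        · have he4 : 4 ≤ effDeg G v := by
            rcases not_and_or.1 hLv with h | h
            · omega
            · exact absurd hd5 h
          have he4q : (4:ℚ) ≤ (B.card : ℚ) := by rw [hBe]; exact_mod_cast he4
          linarith
        · have hd6 : 6 ≤ G.degree v := by omega
          have hd6q : (6:ℚ) ≤ (G.degree v : ℚ) := by exact_mod_cast hd6
          have he3q : (3:ℚ) ≤ (B.card : ℚ) := by rw [hBe]; exact_mod_cast he3
          linarith
      · have hd10 : 10 ≤ G.degree v := by omega
        have hd10q : (10:ℚ) ≤ (G.degree v : ℚ) := by exact_mod_cast hd10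
        have hB0 : (0:ℚ) ≤ (B.card : ℚ) := by positivity
        linarith

lemma swap_sum (G : SimpleGraph V) [Fintype V] [DecidableEq V] [DecidableRel G.Adj]
    (f : V → V → ℚ) :
    ∑ v, ∑ u ∈ G.neighborFinset v, f v u = ∑ v, ∑ u ∈ G.neighborFinset v, f u v := by
  simp only [neighborFinset_eq_filter, Finset.sum_filter]
  rw [Finset.sum_comm]
  refine Finset.sum_congr rfl fun v _ => Finset.sum_congr rfl fun u _ => ?_
  by_cases h : G.Adj u v
  · rw [if_pos h, if_pos h.symm]
  · rw [if_neg h, if_neg (fun h' => h h'.symm)]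

end Discharge


/-- Discharging lemma: a graph with average degree less than `10/3` contains a vertex of
degree at most one, a pair of adjacent degree-two vertices, a vertex of effective degree at
most two and degree between three and nine, or a degree-three vertex with at least two light
neighbors. -/
theorem stmt4 (G : SimpleGraph V) [Fintype V] [DecidableEq V] [DecidableRel G.Adj]
    (havg : (2 * G.edgeFinset.card : ℝ) < 10 / 3 * (Fintype.card V : ℝ)) :
    (∃ v, G.degree v ≤ 1) ∨
    (∃ v w, G.Adj v w ∧ G.degree v = 2 ∧ G.degree w = 2) ∨
    (∃ v, effDeg G v ≤ 2 ∧ 3 ≤ G.degree v ∧ G.degree v ≤ 9) ∨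
    (∃ v, G.degree v = 3 ∧ 2 ≤ ((G.neighborFinset v).filter fun u => Light G u).card) := by
  by_contra hcon
  push_neg at hcon
  obtain ⟨h1', h2', h3', h4'⟩ := hcon
  have h1 : ∀ v, 2 ≤ G.degree v := fun v => by have := h1' v; omega
  have h2 : ∀ v w, G.Adj v w → G.degree v = 2 → G.degree w ≠ 2 := h2'
  have h3 : ∀ v, 3 ≤ G.degree v → G.degree v ≤ 9 → 3 ≤ effDeg G v := by
    intro v ha hb
    by_contra h
    have := h3' v (by omega) ha
    omega
  have h4 : ∀ v, G.degree v = 3 →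
      ((G.neighborFinset v).filter fun u => Light G u).card ≤ 1 := by
    intro v h
    have := h4' v h
    omega
  have key : ∀ v : V, (10/3 : ℚ) ≤ (G.degree v : ℚ)
      - (∑ u ∈ G.neighborFinset v, Discharge.send G v u)
      + ∑ u ∈ G.neighborFinset v, Discharge.send G u v :=
    Discharge.ch_ge G h1 h2 h3 h4
  have hsum : (10/3 : ℚ) * (Fintype.card V : ℚ) ≤
      ∑ v : V, ((G.degree v : ℚ)
        - (∑ u ∈ G.neighborFinset v, Discharge.send G v u)
        + ∑ u ∈ G.neighborFinset v, Discharge.send G u v) := by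
    calc (10/3 : ℚ) * (Fintype.card V : ℚ) = ∑ _v : V, (10/3 : ℚ) := by
          rw [Finset.sum_const, nsmul_eq_mul, Finset.card_univ]; ring
      _ ≤ _ := Finset.sum_le_sum fun v _ => key v
  have hswap := Discharge.swap_sum G (Discharge.send G)
  have hEq : ∑ v : V, ((G.degree v : ℚ)
        - (∑ u ∈ G.neighborFinset v, Discharge.send G v u)
        + ∑ u ∈ G.neighborFinset v, Discharge.send G u v)
      = ∑ v : V, (G.degree v : ℚ) := by
    rw [Finset.sum_add_distrib, Finset.sum_sub_distrib, hswap]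
    ring
  have hdeg : ∑ v : V, (G.degree v : ℚ) = 2 * (G.edgeFinset.card : ℚ) := by
    rw [← Nat.cast_sum]
    rw [G.sum_degrees_eq_twice_card_edges]
    push_cast
    ring
  have hq : (10/3 : ℚ) * (Fintype.card V : ℚ) ≤ 2 * (G.edgeFinset.card : ℚ) := by
    rw [hEq, hdeg] at hsum
    exact hsum
  have hr : ((10/3 : ℚ) : ℝ) * (Fintype.card V : ℝ) ≤ 2 * (G.edgeFinset.card : ℝ) := by
    exact_mod_cast hq
  have h103 : ((10/3 : ℚ) : ℝ) = 10 / 3 := by norm_num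
  rw [h103] at hr
  linarith
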